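/- Let (X,d) be a generalised quasi-metric meet-semilattice. Then the following are equivalent: (a) d is invariant, i.e. d(x,y) = d(x, x ⊓ y) for all x,y; (b) for all x,y,z ∈ X, d(z ⊓ x, z ⊓ y) ≤ d(x,y); (c) for all x,y,z ∈ X, d(x, y ⊓ z) ≤ d(x,y) + d(x,z). -/

import Mathlib

open scoped ENNReal

/-- For a generalised quasi-metric meet-semilattice `(X,d)`, the following
are equivalent: (a) `d` is invariant; (b) all shifts `x ↦ z ⊓ x` are non-expansive;
(c) each `d(x,·)` is subadditive. -/
theorem stmt_10 {X : Type*} [SemilatticeInf X] [Nonempty X] (d : X → X → ℝ≥0∞)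
    (hQM1 : ∀ x y, (d x y = 0 ∧ d y x = 0) ↔ x = y)
    (hQM2 : ∀ x y z, d x z ≤ d x y + d y z)
    (hcompat : ∀ x y, d x y = 0 ↔ x ≤ y) :
    ((∀ x y : X, d x y = d x (x ⊓ y)) ↔ (∀ x y z : X, d (z ⊓ x) (z ⊓ y) ≤ d x y)) ∧
    ((∀ x y : X, d x y = d x (x ⊓ y)) ↔ (∀ x y z : X, d x (y ⊓ z) ≤ d x y + d x z)) := by
  have dz : ∀ x y : X, x ≤ y → d x y = 0 := fun x y h => (hcompat x y).mpr h
  -- always: d x y ≤ d x (x ⊓ y)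
  have le1 : ∀ x y : X, d x y ≤ d x (x ⊓ y) := by
    intro x y
    calc d x y ≤ d x (x ⊓ y) + d (x ⊓ y) y := hQM2 _ _ _
      _ = d x (x ⊓ y) := by rw [dz _ _ inf_le_right, add_zero]
  -- invariance is equivalent to the reverse inequality
  have inv_iff : (∀ x y : X, d x y = d x (x ⊓ y)) ↔ ∀ x y : X, d x (x ⊓ y) ≤ d x y := by
    constructor
    · intro h x y; rw [← h]
    · intro h x y; exact le_antisymm (le1 x y) (h x y)
  constructor
  · constructor
    · intro hinv x y z
      have h1 : d (z ⊓ x) (z ⊓ y) = d (z ⊓ x) y := by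
        rw [hinv (z ⊓ x) (z ⊓ y), hinv (z ⊓ x) y]
        congr 1
        rw [inf_assoc, inf_left_comm x z y, ← inf_assoc, inf_idem, inf_assoc]
      calc d (z ⊓ x) (z ⊓ y) = d (z ⊓ x) y := h1
        _ ≤ d (z ⊓ x) x + d x y := hQM2 _ _ _
        _ = d x y := by rw [dz _ _ inf_le_right, zero_add]
    · intro hb
      rw [inv_iff]
      intro x y
      simpa using hb x y x
  · constructor
    · intro hinv x y z
      calc d x (y ⊓ z) ≤ d x (x ⊓ (y ⊓ z)) := le1 _ _
        _ ≤ d x (x ⊓ y) + d (x ⊓ y) (x ⊓ (y ⊓ z)) := hQM2 _ _ _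
        _ ≤ d x (x ⊓ y) + d (x ⊓ y) ((x ⊓ y) ⊓ z) := by
            rw [← inf_assoc]
        _ = d x (x ⊓ y) + d (x ⊓ y) z := by rw [← hinv (x ⊓ y) z]
        _ ≤ d x (x ⊓ y) + (d (x ⊓ y) x + d x z) := by
            exact add_le_add_right (hQM2 _ _ _) _
        _ = d x y + d x z := by
            rw [dz _ _ inf_le_left, zero_add, ← hinv x y]
    · intro hc
      rw [inv_iff]
      intro x y
      calc d x (x ⊓ y) ≤ d x x + d x y := hc x x y
        _ = d x y := by rw [dz x x le_rfl, zero_add]
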